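/- For any x < y in [0, ∞) and any t ∈ [0, T], and for every stopping time τ with values in [0, T − t], the gain difference satisfies G(t + τ, X_τ^y) − G(t + τ, X_τ^x) ≤ (y − x)·(2(y + 1) + 4 max_{0≤s≤T}|B_s^μ| + 2c) almost surely, where c = sup_{z≥0} z(1 − F^μ(T, z)) < ∞. -/

import Mathlib

open Set MeasureTheory ProbabilityTheory

/-- Standard normal CDF. -/
noncomputable def stdNormalCDF (x : ℝ) : ℝ :=
  ∫ t in Iic x, (Real.sqrt (2 * Real.pi))⁻¹ * Real.exp (-(t ^ 2) / 2)

/-- The CDF of the maximum of Brownian motion with drift `μ` over `[0, s]`. -/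
noncomputable def Fmu (μ s z : ℝ) : ℝ :=
  stdNormalCDF ((z - μ * s) / Real.sqrt s)
    - Real.exp (2 * μ * z) * stdNormalCDF ((-z - μ * s) / Real.sqrt s)

variable {Ω : Type*} [MeasurableSpace Ω]

/-- `B` is a standard Brownian motion on `[0, ∞)` under `P`: it starts at `0`, has
continuous paths, measurable marginals, Gaussian stationary increments and
independent increments. -/
def IsStandardBM (P : Measure Ω) (B : ℝ → Ω → ℝ) : Prop :=
  (∀ ω, B 0 ω = 0) ∧
  (∀ ω, Continuous fun t => B t ω) ∧
  (∀ t, Measurable (B t)) ∧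
  (∀ s t : ℝ, 0 ≤ s → s ≤ t →
    Measure.map (fun ω => B t ω - B s ω) P = gaussianReal 0 ((t - s).toNNReal)) ∧
  (∀ (n : ℕ) (t : ℕ → ℝ), Monotone t → (∀ i, 0 ≤ t i) →
    iIndepFun
      (fun (i : Fin n) ω => B (t (i + 1)) ω - B (t i) ω) P)

/-- Brownian motion with drift `μ`. -/
noncomputable def Bdrift (B : ℝ → Ω → ℝ) (μ t : ℝ) (ω : Ω) : ℝ := B t ω + μ * t

/-- Running maximum of the drifted Brownian motion. -/
noncomputable def Smax (B : ℝ → Ω → ℝ) (μ t : ℝ) (ω : Ω) : ℝ :=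
  sSup ((fun s => Bdrift B μ s ω) '' Icc 0 t)

/-- Natural filtration of `B` (as a family of σ-algebras). -/
noncomputable def natSigma (B : ℝ → Ω → ℝ) (t : ℝ) : MeasurableSpace Ω :=
  ⨆ s ∈ Icc (0:ℝ) t, MeasurableSpace.comap (B s) inferInstance

/-- The process `X_t^x = (x ∨ S_t^μ) - B_t^μ`. -/
noncomputable def Xproc (B : ℝ → Ω → ℝ) (μ x t : ℝ) (ω : Ω) : ℝ :=
  max x (Smax B μ t ω) - Bdrift B μ t ω

/-- The gain function `G(t, x) = x² + 2∫_x^∞ z (1 - F^μ(T - t, z)) dz`. -/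
noncomputable def Gfun (μ T t x : ℝ) : ℝ :=
  x ^ 2 + 2 * ∫ z in Ioi x, z * (1 - Fmu μ (T - t) z)

/-- `c = sup_{z ≥ 0} z (1 - F^μ(T, z))`. -/
noncomputable def cConst (μ T : ℝ) : ℝ :=
  sSup {r : ℝ | ∃ z : ℝ, 0 ≤ z ∧ r = z * (1 - Fmu μ T z)}

/-- `Z = 2(y+1) + 4 max_{0≤s≤T} |B_s^μ| + 2c`. -/
noncomputable def Zrv (B : ℝ → Ω → ℝ) (μ T y : ℝ) (ω : Ω) : ℝ :=
  2 * (y + 1) + 4 * sSup ((fun s => |Bdrift B μ s ω|) '' Icc 0 T) + 2 * cConst μ T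

/- Auxiliary lemmas -/


noncomputable def gd (t : ℝ) : ℝ := (Real.sqrt (2 * Real.pi))⁻¹ * Real.exp (-(t ^ 2) / 2)

lemma gd_nonneg (t : ℝ) : 0 ≤ gd t := by
  unfold gd
  positivity

lemma gd_integrable : Integrable gd := by
  have h : Integrable (fun t : ℝ => Real.exp (-(1/2 : ℝ) * t ^ 2)) := integrable_exp_neg_mul_sq (by norm_num)
  have := h.const_mul ((Real.sqrt (2 * Real.pi))⁻¹)
  convert this using 2 with t
  unfold gd
  ring_nf

lemma gd_integral : ∫ t, gd t = 1 := by
  have h : ∫ t : ℝ, Real.exp (-(1/2 : ℝ) * t ^ 2) = Real.sqrt (Real.pi / (1/2)) := integral_gaussian (1/2)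
  have heq : ∫ t, gd t = (Real.sqrt (2 * Real.pi))⁻¹ * ∫ t : ℝ, Real.exp (-(1/2 : ℝ) * t ^ 2) := by
    rw [← integral_const_mul]
    congr 1 with t
    unfold gd
    ring_nf
  rw [heq, h]
  have : Real.pi / (1/2) = 2 * Real.pi := by ring
  rw [this]
  have hpos : (0:ℝ) < Real.sqrt (2 * Real.pi) := Real.sqrt_pos.2 (by positivity)
  field_simp

lemma stdNormalCDF_eq (x : ℝ) : (∫ t in Iic x, (Real.sqrt (2 * Real.pi))⁻¹ * Real.exp (-(t ^ 2) / 2)) = ∫ t in Iic x, gd t := rfl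

lemma cdf_eq (x : ℝ) : stdNormalCDF x = ∫ t in Iic x, gd t := rfl

lemma cdf_nonneg (x : ℝ) : 0 ≤ stdNormalCDF x := by
  rw [cdf_eq]; exact setIntegral_nonneg measurableSet_Iic fun t _ => gd_nonneg t

lemma cdf_le_one (x : ℝ) : stdNormalCDF x ≤ 1 := by
  rw [cdf_eq, ← gd_integral]
  exact setIntegral_le_integral gd_integrable (Filter.Eventually.of_forall gd_nonneg)

lemma cdf_mono : Monotone stdNormalCDF := by
  intro a b hab
  rw [cdf_eq, cdf_eq]
  exact setIntegral_mono_set gd_integrable.integrableOn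
    (Filter.Eventually.of_forall gd_nonneg) (HasSubset.Subset.eventuallyLE (Iic_subset_Iic.2 hab))

lemma cdf_measurable : Measurable stdNormalCDF := cdf_mono.measurable

lemma shift_integral (c v : ℝ) : ∫ t : ℝ, c * gd (t - v) = c := by
  rw [integral_const_mul, integral_sub_right_eq_self gd v, gd_integral, mul_one]

lemma gd_shift_le {v t : ℝ} (h : v ^ 2 + (t - v) ^ 2 ≤ t ^ 2) :
    gd t ≤ Real.exp (-(v ^ 2) / 2) * gd (t - v) := by
  unfold gd
  rw [mul_comm (Real.exp _), mul_assoc]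
  apply mul_le_mul_of_nonneg_left _ (by positivity)
  rw [← Real.exp_add]
  apply Real.exp_le_exp.2
  linarith

lemma cdf_le_exp {v : ℝ} (hv : v ≤ 0) : stdNormalCDF v ≤ Real.exp (-(v ^ 2) / 2) := by
  rw [cdf_eq]
  calc ∫ t in Iic v, gd t ≤ ∫ t in Iic v, Real.exp (-(v ^ 2) / 2) * gd (t - v) := by
        apply setIntegral_mono_on gd_integrable.integrableOn
          (((gd_integrable.comp_sub_right v).const_mul _).integrableOn) measurableSet_Iic
        intro t ht
        exact gd_shift_le (by nlinarith [mem_Iic.1 ht])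
    _ ≤ ∫ t : ℝ, Real.exp (-(v ^ 2) / 2) * gd (t - v) := by
        apply setIntegral_le_integral ((gd_integrable.comp_sub_right v).const_mul _)
        exact Filter.Eventually.of_forall fun t => mul_nonneg (Real.exp_pos _).le (gd_nonneg _)
    _ = Real.exp (-(v ^ 2) / 2) := shift_integral _ _

lemma one_sub_cdf (u : ℝ) : 1 - stdNormalCDF u = ∫ t in Ioi u, gd t := by
  have := integral_add_compl (measurableSet_Iic : MeasurableSet (Iic u)) gd_integrable (μ := volume)
  rw [compl_Iic, gd_integral] at this
  rw [cdf_eq]; linarith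

lemma one_sub_cdf_le {u : ℝ} (hu : 0 ≤ u) : 1 - stdNormalCDF u ≤ Real.exp (-(u ^ 2) / 2) := by
  rw [one_sub_cdf]
  calc ∫ t in Ioi u, gd t ≤ ∫ t in Ioi u, Real.exp (-(u ^ 2) / 2) * gd (t - u) := by
        apply setIntegral_mono_on gd_integrable.integrableOn
          (((gd_integrable.comp_sub_right u).const_mul _).integrableOn) measurableSet_Ioi
        intro t ht
        exact gd_shift_le (by nlinarith [(mem_Ioi.1 ht).le])
    _ ≤ ∫ t : ℝ, Real.exp (-(u ^ 2) / 2) * gd (t - u) := by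
        apply setIntegral_le_integral ((gd_integrable.comp_sub_right u).const_mul _)
        exact Filter.Eventually.of_forall fun t => mul_nonneg (Real.exp_pos _).le (gd_nonneg _)
    _ = Real.exp (-(u ^ 2) / 2) := shift_integral _ _

lemma one_sub_Fmu_nonneg (μ s z : ℝ) : 0 ≤ 1 - Fmu μ s z := by
  unfold Fmu
  nlinarith [cdf_le_one ((z - μ * s) / Real.sqrt s), cdf_nonneg ((-z - μ * s) / Real.sqrt s),
    Real.exp_pos (2 * μ * z)]

lemma one_sub_Fmu_le (μ s z : ℝ) : 1 - Fmu μ s z ≤ 1 + Real.exp (2 * μ * z) := by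
  unfold Fmu
  nlinarith [cdf_nonneg ((z - μ * s) / Real.sqrt s), cdf_le_one ((-z - μ * s) / Real.sqrt s),
    Real.exp_pos (2 * μ * z)]

lemma Fmu_meas (μ s : ℝ) : Measurable (fun z => Fmu μ s z) := by
  unfold Fmu
  exact ((cdf_measurable.comp ((measurable_id.sub_const (μ * s)).div_const _)).sub
    ((Real.measurable_exp.comp (measurable_const.mul measurable_id)).mul
      (cdf_measurable.comp ((measurable_neg.sub_const (μ * s)).div_const _))))

/-- bound for large z -/
lemma tail_bound (μ T : ℝ) (hT : 0 < T) {z : ℝ} (hz : 3 * |μ| * T + 8 * T + 1 ≤ z) :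
    z * (1 - Fmu μ T z) ≤ 2 := by
  have hzpos : 0 < z := by nlinarith [abs_nonneg μ]
  have hsq : Real.sqrt T ^ 2 = T := Real.sq_sqrt hT.le
  have hsqpos : 0 < Real.sqrt T := Real.sqrt_pos.2 hT
  have hmuT : |μ| * T ≤ z / 3 := by nlinarith
  have habs : μ * T ≤ |μ| * T := by
    have := le_abs_self μ
    nlinarith
  have habs' : -(|μ| * T) ≤ μ * T := by
    have := neg_abs_le μ
    nlinarith
  -- u ≥ 0, v ≤ 0
  set u := (z - μ * T) / Real.sqrt T with hu
  set v := (-z - μ * T) / Real.sqrt T with hv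
  have hu0 : 0 ≤ u := div_nonneg (by nlinarith) hsqpos.le
  have hv0 : v ≤ 0 := div_nonpos_of_nonpos_of_nonneg (by nlinarith) hsqpos.le
  set w := (z - μ * T) ^ 2 / (2 * T) with hw
  have hue : -(u ^ 2) / 2 = -w := by
    rw [hu, hw, div_pow, hsq]; ring
  have hve : 2 * μ * z + -(v ^ 2) / 2 = -w := by
    rw [hv, hw, div_pow, hsq]; field_simp; ring
  have h1 : 1 - stdNormalCDF u ≤ Real.exp (-w) := by rw [← hue]; exact one_sub_cdf_le hu0
  have h2 : Real.exp (2 * μ * z) * stdNormalCDF v ≤ Real.exp (-w) := by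
    calc Real.exp (2 * μ * z) * stdNormalCDF v ≤ Real.exp (2 * μ * z) * Real.exp (-(v ^ 2) / 2) :=
          mul_le_mul_of_nonneg_left (cdf_le_exp hv0) (Real.exp_pos _).le
      _ = Real.exp (-w) := by rw [← Real.exp_add, hve]
  have hFm : 1 - Fmu μ T z ≤ 2 * Real.exp (-w) := by
    unfold Fmu
    have := cdf_nonneg v
    nlinarith [Real.exp_pos (2 * μ * z)]
  have hwz : 2 * z ^ 2 / (9 * T) ≤ w := by
    rw [hw]
    rw [div_le_div_iff₀ (by positivity) (by positivity)]
    nlinarith [mul_nonneg hT.le (mul_nonneg (show (0:ℝ) ≤ z - μ * T - 2 * z / 3 by linarith)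
      (show (0:ℝ) ≤ z - μ * T + 2 * z / 3 by linarith))]
  have hE : 0 < Real.exp (-w) := Real.exp_pos _
  have hwE : w * Real.exp (-w) ≤ 1 := by
    have h3 : w ≤ Real.exp w := (Real.add_one_le_exp w).trans' (by linarith)
    calc w * Real.exp (-w) ≤ Real.exp w * Real.exp (-w) := mul_le_mul_of_nonneg_right h3 hE.le
      _ = 1 := by rw [← Real.exp_add]; simp
  -- z * exp(-w) ≤ 1
  have hzE : z * Real.exp (-w) ≤ 1 := by
    have hw0 : 0 < w := by
      have : 0 < 2 * z ^ 2 / (9 * T) := by positivity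
      linarith
    have hEw : Real.exp (-w) ≤ 1 / w := by
      rw [le_div_iff₀ hw0]; linarith [hwE]
    calc z * Real.exp (-w) ≤ z * (1 / w) := mul_le_mul_of_nonneg_left hEw hzpos.le
      _ ≤ 1 := by
        rw [mul_one_div, div_le_one hw0]
        calc z ≤ 2 * z ^ 2 / (9 * T) := by
              rw [le_div_iff₀ (by positivity)]; nlinarith
          _ ≤ w := hwz
  calc z * (1 - Fmu μ T z) ≤ z * (2 * Real.exp (-w)) :=
        mul_le_mul_of_nonneg_left hFm hzpos.le
    _ = 2 * (z * Real.exp (-w)) := by ring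
    _ ≤ 2 := by linarith

lemma bdd_above_lemma (μ T : ℝ) (hT : 0 < T) :
    BddAbove {r : ℝ | ∃ z : ℝ, 0 ≤ z ∧ r = z * (1 - Fmu μ T z)} := by
  set R := 3 * |μ| * T + 8 * T + 1 with hR
  have hR0 : 0 < R := by positivity
  refine ⟨max (R * (1 + Real.exp (2 * |μ| * R))) 2, ?_⟩
  rintro r ⟨z, hz, rfl⟩
  rcases le_or_gt z R with h | h
  · refine le_max_of_le_left ?_
    have h1 : 1 - Fmu μ T z ≤ 1 + Real.exp (2 * |μ| * R) := by
      refine (one_sub_Fmu_le μ T z).trans ?_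
      have : 2 * μ * z ≤ 2 * |μ| * R := by
        have h2 : μ * z ≤ |μ| * z := mul_le_mul_of_nonneg_right (le_abs_self μ) hz
        have h3 : |μ| * z ≤ |μ| * R := mul_le_mul_of_nonneg_left h (abs_nonneg μ)
        linarith
      linarith [Real.exp_le_exp.2 this]
    calc z * (1 - Fmu μ T z) ≤ R * (1 + Real.exp (2 * |μ| * R)) := by
          apply mul_le_mul h h1 (one_sub_Fmu_nonneg μ T z) hR0.le
      _ = R * (1 + Real.exp (2 * |μ| * R)) := rfl
  · exact le_max_of_le_right (tail_bound μ T hT h.le)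

lemma int_diff_le (f : ℝ → ℝ) {b a : ℝ} (hb : 0 ≤ b) (hba : b ≤ a)
    (hnn : ∀ z, 0 ≤ z → 0 ≤ f z) (hint : IntegrableOn f (Ioc b a)) :
    (∫ z in Ioi a, f z) ≤ ∫ z in Ioi b, f z := by
  have hsplit : Ioi b = Ioc b a ∪ Ioi a := (Ioc_union_Ioi_eq_Ioi hba).symm
  by_cases h : IntegrableOn f (Ioi a)
  · rw [hsplit, setIntegral_union (Ioc_disjoint_Ioi le_rfl) measurableSet_Ioi hint h]
    have : 0 ≤ ∫ z in Ioc b a, f z :=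
      setIntegral_nonneg measurableSet_Ioc fun z hz => hnn z (hb.trans hz.1.le)
    linarith
  · have h2 : ¬ IntegrableOn f (Ioi b) := fun hI =>
      h (hI.mono_set (by rw [hsplit]; exact subset_union_right))
    rw [integral_undef h, integral_undef h2]

/-- for `0 ≤ x < y`, `t ∈ [0, T]` and any stopping time `τ` with values
in `[0, T - t]`, the gain difference satisfies
`G(t+τ, X_τ^y) - G(t+τ, X_τ^x) ≤ (y - x)(2(y+1) + 4 max_{0≤s≤T}|B_s^μ| + 2c)` a.s.,
where `c = sup_{z≥0} z(1 - F^μ(T, z)) < ∞`. -/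
theorem gain_difference_bound
    (P : Measure Ω) [IsProbabilityMeasure P] (B : ℝ → Ω → ℝ)
    (hB : IsStandardBM P B) (μ T : ℝ) (hT : 0 < T)
    (ℱ : Filtration ℝ ‹MeasurableSpace Ω›) (hℱ : ∀ t, ℱ t = natSigma B t)
    (x y t : ℝ) (hx : 0 ≤ x) (hxy : x < y) (ht : t ∈ Icc 0 T)
    (τ : Ω → ℝ) (hτ : IsStoppingTime ℱ (fun ω => (τ ω : WithTop ℝ))) (hτv : ∀ ω, τ ω ∈ Icc 0 (T - t)) :
    BddAbove {r : ℝ | ∃ z : ℝ, 0 ≤ z ∧ r = z * (1 - Fmu μ T z)} ∧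
    ∀ᵐ ω ∂P,
      Gfun μ T (t + τ ω) (Xproc B μ y (τ ω) ω) - Gfun μ T (t + τ ω) (Xproc B μ x (τ ω) ω)
        ≤ (y - x) * Zrv B μ T y ω := by
  have hbdd := bdd_above_lemma μ T hT
  refine ⟨hbdd, ae_of_all _ fun ω => ?_⟩
  -- basic facts
  obtain ⟨hτ0, hτT⟩ := hτv ω
  obtain ⟨ht0, htT⟩ := ht
  have hτle : τ ω ≤ T := by linarith
  have hcont : Continuous fun s => Bdrift B μ s ω := by
    unfold Bdrift; exact (hB.2.1 ω).add (continuous_const.mul continuous_id)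
  -- the maximum M of |Bdrift| on [0,T]
  set M := sSup ((fun s => |Bdrift B μ s ω|) '' Icc 0 T) with hM
  have hbddM : BddAbove ((fun s => |Bdrift B μ s ω|) '' Icc 0 T) :=
    (isCompact_Icc.image hcont.abs).bddAbove
  have hM_ub : ∀ s ∈ Icc (0:ℝ) T, |Bdrift B μ s ω| ≤ M := fun s hs =>
    le_csSup hbddM ⟨s, hs, rfl⟩
  have hM0 : 0 ≤ M := le_trans (abs_nonneg _) (hM_ub 0 ⟨le_rfl, hT.le⟩)
  -- the running max S
  set S := Smax B μ (τ ω) ω with hS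
  have hbddS : BddAbove ((fun s => Bdrift B μ s ω) '' Icc 0 (τ ω)) :=
    (isCompact_Icc.image hcont).bddAbove
  have hSne : ((fun s => Bdrift B μ s ω) '' Icc 0 (τ ω)).Nonempty :=
    (nonempty_Icc.2 hτ0).image _
  have hS_le_M : S ≤ M := by
    apply csSup_le hSne
    rintro r ⟨s, hs, rfl⟩
    exact (le_abs_self _).trans (hM_ub s ⟨hs.1, hs.2.trans hτle⟩)
  have hBd_le_S : Bdrift B μ (τ ω) ω ≤ S :=
    le_csSup hbddS ⟨τ ω, ⟨hτ0, le_rfl⟩, rfl⟩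
  have hBd_abs : |Bdrift B μ (τ ω) ω| ≤ M := hM_ub _ ⟨hτ0, hτle⟩
  have hBd_lb : -M ≤ Bdrift B μ (τ ω) ω := neg_le_of_abs_le hBd_abs
  -- a and b
  set a := Xproc B μ y (τ ω) ω with ha
  set b := Xproc B μ x (τ ω) ω with hb
  have e1 : a = max y S - Bdrift B μ (τ ω) ω := rfl
  have e2 : b = max x S - Bdrift B μ (τ ω) ω := rfl
  have hba : b ≤ a := by
    rw [e1, e2]
    have : max x S ≤ max y S := max_le_max hxy.le le_rfl
    linarith
  have hb0 : 0 ≤ b := by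
    rw [e2]
    have : Bdrift B μ (τ ω) ω ≤ max x S := hBd_le_S.trans (le_max_right _ _)
    linarith
  have hab : a - b ≤ y - x := by
    rw [e1, e2]
    have h1 : max y S ≤ max x S + (y - x) :=
      max_le (by linarith [le_max_left x S]) (by linarith [le_max_right x S])
    linarith
  have ha_le : a ≤ y + 2 * M := by
    rw [e1]
    have h1 : max y S ≤ y + M := max_le (by linarith) (by linarith [hS_le_M])
    linarith
  -- c ≥ 0
  have hc0 : 0 ≤ cConst μ T := by
    apply le_csSup hbdd
    exact ⟨0, le_rfl, by ring⟩
  -- the G difference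
  set s' := T - (t + τ ω) with hs'
  set f : ℝ → ℝ := fun z => z * (1 - Fmu μ s' z) with hf
  have hnn : ∀ z, 0 ≤ z → 0 ≤ f z := fun z hz =>
    mul_nonneg hz (one_sub_Fmu_nonneg μ s' z)
  have hfmeas : Measurable f := measurable_id.mul (measurable_const.sub (Fmu_meas μ s'))
  have ha0 : 0 ≤ a := hb0.trans hba
  have hint : IntegrableOn f (Ioc b a) := by
    apply Measure.integrableOn_of_bounded (M := a * (1 + Real.exp (2 * |μ| * a)))
      measure_Ioc_lt_top.ne hfmeas.aestronglyMeasurable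
    refine (ae_restrict_iff' measurableSet_Ioc).2 (ae_of_all _ fun z hz => ?_)
    have hz0 : 0 ≤ z := hb0.trans hz.1.le
    have hza : z ≤ a := hz.2
    have h1 : 1 - Fmu μ s' z ≤ 1 + Real.exp (2 * |μ| * a) := by
      refine (one_sub_Fmu_le μ s' z).trans ?_
      have : 2 * μ * z ≤ 2 * |μ| * a := by
        have h2 : μ * z ≤ |μ| * z := mul_le_mul_of_nonneg_right (le_abs_self μ) hz0
        have h3 : |μ| * z ≤ |μ| * a := mul_le_mul_of_nonneg_left hza (abs_nonneg μ)
        linarith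
      linarith [Real.exp_le_exp.2 this]
    rw [Real.norm_eq_abs, abs_of_nonneg (hnn z hz0)]
    exact mul_le_mul hza h1 (one_sub_Fmu_nonneg μ s' z) ha0
  have hIdiff : (∫ z in Ioi a, f z) ≤ ∫ z in Ioi b, f z := int_diff_le f hb0 hba hnn hint
  have hGdiff : Gfun μ T (t + τ ω) a - Gfun μ T (t + τ ω) b ≤ a ^ 2 - b ^ 2 := by
    unfold Gfun
    rw [← hs']
    have := hIdiff
    simp only [← hf]
    linarith
  refine hGdiff.trans ?_
  unfold Zrv
  rw [← hM]
  nlinarith [mul_nonneg (sub_nonneg.2 hab) (by linarith : (0:ℝ) ≤ a + b),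
    mul_nonneg (by linarith : (0:ℝ) ≤ y - x) (by linarith : (0:ℝ) ≤ 2 * (y + 1) + 4 * M + 2 * cConst μ T - (a + b))]
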